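/- arXiv:2603.17515 — 6 statements merged into one kernel-verified Lean document; each statement's English description precedes it below -/
import Mathlib

section
/- For a subgroup U of a direct product G × H of finite groups, one has [k₁(U), p₁(U)] ≤ k₁(U') ≤ (p₁(U))' ∩ k₁(U), where k₁(U) = {g ∈ G : (g,1) ∈ U} and k₁(U') = {g ∈ G : (g,1) ∈ U'}. -/
def p1 {G H : Type*} [Group G] [Group H] (U : Subgroup (G × H)) : Subgroup G :=
  U.map (MonoidHom.fst G H)

def k1 {G H : Type*} [Group G] [Group H] (U : Subgroup (G × H)) : Subgroup G :=
  U.comap (MonoidHom.inl G H)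

theorem commutator_k1_p1_le_k1_commutator_le_inf {G H : Type*} [Group G] [Group H]
    [Finite G] [Finite H] (U : Subgroup (G × H)) :
    ⁅k1 U, p1 U⁆ ≤ k1 ⁅U, U⁆ ∧ k1 ⁅U, U⁆ ≤ ⁅p1 U, p1 U⁆ ⊓ k1 U := by
  constructor
  · rw [Subgroup.commutator_le]
    rintro g hg g' hg'
    obtain ⟨⟨a, h⟩, hu, rfl⟩ := hg'
    open scoped commutatorElement in
    have hmem : (⁅(g, (1 : H)), ((a, h) : G × H)⁆ : G × H) ∈ ⁅U, U⁆ :=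
      Subgroup.commutator_mem_commutator hg hu
    open scoped commutatorElement in
    have : (⁅(g, (1 : H)), ((a, h) : G × H)⁆ : G × H) = (⁅g, a⁆, 1) := by
      simp [commutatorElement_def, Prod.ext_iff]
    rw [this] at hmem
    exact hmem
  · intro g hg
    refine ⟨?_, ?_⟩
    · have : p1 ⁅U, U⁆ ≤ ⁅p1 U, p1 U⁆ := by
        unfold p1
        rw [Subgroup.map_commutator]
      exact this ⟨(g, 1), hg, rfl⟩
    · have : ⁅U, U⁆ ≤ U := Subgroup.commutator_le.mpr fun a ha b hb =>
        mul_mem (mul_mem (mul_mem ha hb) (inv_mem ha)) (inv_mem hb)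
      exact this hg
end

section
/- Let G, H be finite groups and U ≤ G × H a subdirect product. Under the hypothesis of Theorem on surjectivity, the condition G' ∩ k₁(U) = k₁(U') holds if and only if H' ∩ k₂(U) = k₂(U'). -/
def p2 {G H : Type*} [Group G] [Group H] (U : Subgroup (G × H)) : Subgroup H :=
  U.map (MonoidHom.snd G H)

def k2 {G H : Type*} [Group G] [Group H] (U : Subgroup (G × H)) : Subgroup H :=
  U.comap (MonoidHom.inr G H)

/-- card of range times card of kernel equals card of domain. -/
lemma aux_card_range_mul_card_ker {G M : Type*} [Group G] [Group M] [Finite G]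
    (f : G →* M) : Nat.card f.range * Nat.card f.ker = Nat.card G := by
  rw [Subgroup.card_eq_card_quotient_mul_card_subgroup f.ker]
  congr 1
  exact (Nat.card_congr (QuotientGroup.quotientKerEquivRange f).toEquiv).symm

lemma aux_card_p2_k1 {G H : Type*} [Group G] [Group H] [Finite G] [Finite H]
    (U : Subgroup (G × H)) :
    Nat.card (p2 U) * Nat.card (k1 U) = Nat.card U := by
  have key := aux_card_range_mul_card_ker ((MonoidHom.snd G H).comp U.subtype)
  have hr : ((MonoidHom.snd G H).comp U.subtype).range = p2 U := by
    rw [MonoidHom.range_comp, Subgroup.range_subtype]; rfl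
  rw [hr] at key
  rw [← key]
  congr 1
  refine Nat.card_congr ⟨fun x => ⟨⟨(x.1, 1), x.2⟩, rfl⟩, fun y => ⟨y.1.1.1, ?_⟩, ?_, ?_⟩
  · have h1 : ((MonoidHom.snd G H).comp U.subtype) y.1 = 1 := y.2
    have he : y.1.1 = (y.1.1.1, (1 : H)) := by
      ext
      · rfl
      · exact h1
    have hm := y.1.2
    rw [he] at hm
    exact hm
  · intro x; rfl
  · intro y
    ext
    · rfl
    · exact (y.2 : ((MonoidHom.snd G H).comp U.subtype) y.1 = 1).symm

lemma aux_card_p1_k2 {G H : Type*} [Group G] [Group H] [Finite G] [Finite H]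
    (U : Subgroup (G × H)) :
    Nat.card (p1 U) * Nat.card (k2 U) = Nat.card U := by
  have key := aux_card_range_mul_card_ker ((MonoidHom.fst G H).comp U.subtype)
  have hr : ((MonoidHom.fst G H).comp U.subtype).range = p1 U := by
    rw [MonoidHom.range_comp, Subgroup.range_subtype]; rfl
  rw [hr] at key
  rw [← key]
  congr 1
  refine Nat.card_congr ⟨fun x => ⟨⟨(1, x.1), x.2⟩, rfl⟩, fun y => ⟨y.1.1.2, ?_⟩, ?_, ?_⟩
  · have h1 : ((MonoidHom.fst G H).comp U.subtype) y.1 = 1 := y.2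
    have he : y.1.1 = ((1 : G), y.1.1.2) := by
      ext
      · exact h1
      · rfl
    have hm := y.1.2
    rw [he] at hm
    exact hm
  · intro x; rfl
  · intro y
    ext
    · exact (y.2 : ((MonoidHom.fst G H).comp U.subtype) y.1 = 1).symm
    · rfl

/-- Commutator subgroup cardinality through a normal subgroup. -/
lemma aux_card_commutator_inf {G : Type*} [Group G] [Finite G] (N : Subgroup G) [N.Normal] :
    Nat.card (commutator (G ⧸ N)) * Nat.card ((commutator G ⊓ N : Subgroup G)) =
      Nat.card (commutator G) := by
  have key := aux_card_range_mul_card_ker ((QuotientGroup.mk' N).comp (commutator G).subtype)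
  have hr : ((QuotientGroup.mk' N).comp (commutator G).subtype).range = commutator (G ⧸ N) := by
    rw [MonoidHom.range_comp, Subgroup.range_subtype, commutator_def, commutator_def,
      Subgroup.map_commutator, Subgroup.map_top_of_surjective _ (QuotientGroup.mk'_surjective N)]
  rw [hr] at key
  rw [← key]
  congr 1
  have hmem : ∀ y : ((QuotientGroup.mk' N).comp (commutator G).subtype).ker, (y.1.1 : G) ∈ N := by
    intro y
    have h1 : QuotientGroup.mk' N y.1.1 = 1 := y.2
    rwa [QuotientGroup.mk'_apply, QuotientGroup.eq_one_iff] at h1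
  refine Nat.card_congr ⟨fun x => ⟨⟨x.1, x.2.1⟩, ?_⟩, fun y => ⟨y.1.1, y.1.2, hmem y⟩, ?_, ?_⟩
  · show QuotientGroup.mk' N x.1 = 1
    rw [QuotientGroup.mk'_apply, QuotientGroup.eq_one_iff]
    exact x.2.2
  · intro x; rfl
  · intro y; rfl

lemma aux_card_commutator_congr {A B : Type*} [Group A] [Group B] (e : A ≃* B) :
    Nat.card (commutator A) = Nat.card (commutator B) := by
  have h : (commutator A).map e.toMonoidHom = commutator B := by
    rw [commutator_def, commutator_def, Subgroup.map_commutator,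
      Subgroup.map_top_of_surjective _ e.surjective]
  rw [← h]
  exact Nat.card_congr (Subgroup.equivMapOfInjective _ _ e.injective).toEquiv

theorem extensibility_condition_symm {G H : Type*} [Group G] [Group H]
    [Finite G] [Finite H] (U : Subgroup (G × H))
    (h1 : p1 U = ⊤) (h2 : p2 U = ⊤) :
    commutator G ⊓ k1 U = k1 ⁅U, U⁆ ↔ commutator H ⊓ k2 U = k2 ⁅U, U⁆ := by
  -- k1 U and k2 U are normal
  have hn1 : (k1 U).Normal := by
    constructor
    intro n hn g
    obtain ⟨u, hu, hu1⟩ : ∃ u ∈ U, u.1 = g := by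
      have hg : g ∈ p1 U := h1 ▸ Subgroup.mem_top g
      obtain ⟨u, hu, hu1⟩ := hg
      exact ⟨u, hu, hu1⟩
    have key : (MonoidHom.inl G H) (g * n * g⁻¹) = u * (MonoidHom.inl G H) n * u⁻¹ := by
      ext
      · simp [← hu1]
      · simp
    show (MonoidHom.inl G H) (g * n * g⁻¹) ∈ U
    rw [key]
    exact U.mul_mem (U.mul_mem hu hn) (U.inv_mem hu)
  have hn2 : (k2 U).Normal := by
    constructor
    intro n hn g
    obtain ⟨u, hu, hu2⟩ : ∃ u ∈ U, u.2 = g := by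
      have hg : g ∈ p2 U := h2 ▸ Subgroup.mem_top g
      obtain ⟨u, hu, hu2⟩ := hg
      exact ⟨u, hu, hu2⟩
    have key : (MonoidHom.inr G H) (g * n * g⁻¹) = u * (MonoidHom.inr G H) n * u⁻¹ := by
      ext
      · simp
      · simp [← hu2]
    show (MonoidHom.inr G H) (g * n * g⁻¹) ∈ U
    rw [key]
    exact U.mul_mem (U.mul_mem hu hn) (U.inv_mem hu)
  -- the Goursat isomorphism between the quotients
  set φ : U →* G ⧸ k1 U := (QuotientGroup.mk' (k1 U)).comp ((MonoidHom.fst G H).comp U.subtype)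
    with hφdef
  set ψ : U →* H ⧸ k2 U := (QuotientGroup.mk' (k2 U)).comp ((MonoidHom.snd G H).comp U.subtype)
    with hψdef
  have hφs : Function.Surjective φ := by
    intro x
    obtain ⟨g, rfl⟩ := QuotientGroup.mk'_surjective (k1 U) x
    have hg : g ∈ p1 U := h1 ▸ Subgroup.mem_top g
    obtain ⟨u, hu, hu1⟩ := hg
    refine ⟨⟨u, hu⟩, ?_⟩
    show QuotientGroup.mk' (k1 U) u.1 = QuotientGroup.mk' (k1 U) g
    rw [show u.1 = g from hu1]
  have hψs : Function.Surjective ψ := by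
    intro x
    obtain ⟨g, rfl⟩ := QuotientGroup.mk'_surjective (k2 U) x
    have hg : g ∈ p2 U := h2 ▸ Subgroup.mem_top g
    obtain ⟨u, hu, hu2⟩ := hg
    refine ⟨⟨u, hu⟩, ?_⟩
    show QuotientGroup.mk' (k2 U) u.2 = QuotientGroup.mk' (k2 U) g
    rw [show u.2 = g from hu2]
  have hkeriff : ∀ u : U, u.1.1 ∈ k1 U ↔ u.1.2 ∈ k2 U := by
    intro u
    constructor
    · intro h
      have hm : ((u.1.1, 1) : G × H)⁻¹ * u.1 ∈ U := U.mul_mem (U.inv_mem h) u.2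
      have he : ((u.1.1, 1) : G × H)⁻¹ * u.1 = (1, u.1.2) := by
        ext <;> simp
      rwa [he] at hm
    · intro h
      have hm : u.1 * ((1, u.1.2) : G × H)⁻¹ ∈ U := U.mul_mem u.2 (U.inv_mem h)
      have he : u.1 * ((1, u.1.2) : G × H)⁻¹ = (u.1.1, 1) := by
        ext <;> simp
      rwa [he] at hm
  have hker : φ.ker = ψ.ker := by
    ext u
    simp only [MonoidHom.mem_ker, hφdef, hψdef, MonoidHom.comp_apply,
      QuotientGroup.mk'_apply, QuotientGroup.eq_one_iff]
    exact hkeriff u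
  have e : (G ⧸ k1 U) ≃* (H ⧸ k2 U) :=
    ((QuotientGroup.quotientKerEquivOfSurjective φ hφs).symm.trans
      (QuotientGroup.quotientMulEquivOfEq hker)).trans
      (QuotientGroup.quotientKerEquivOfSurjective ψ hψs)
  have hq : Nat.card (commutator (G ⧸ k1 U)) = Nat.card (commutator (H ⧸ k2 U)) :=
    aux_card_commutator_congr e
  -- commutator projections
  have hp1c : p1 ⁅U, U⁆ = commutator G := by
    show Subgroup.map (MonoidHom.fst G H) ⁅U, U⁆ = commutator G
    rw [Subgroup.map_commutator]
    show ⁅p1 U, p1 U⁆ = commutator G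
    rw [h1, commutator_def]
  have hp2c : p2 ⁅U, U⁆ = commutator H := by
    show Subgroup.map (MonoidHom.snd G H) ⁅U, U⁆ = commutator H
    rw [Subgroup.map_commutator]
    show ⁅p2 U, p2 U⁆ = commutator H
    rw [h2, commutator_def]
  -- cardinality identities
  have F1 := aux_card_commutator_inf (k1 U)
  have F2 := aux_card_commutator_inf (k2 U)
  have F3 := aux_card_p2_k1 ⁅U, U⁆
  have F4 := aux_card_p1_k2 ⁅U, U⁆
  rw [hp2c] at F3
  rw [hp1c] at F4
  -- inclusions
  have hUU : (⁅U, U⁆ : Subgroup (G × H)) ≤ U := by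
    rw [Subgroup.commutator_le]
    intro g hg h hh
    simp only [commutatorElement_def]
    exact U.mul_mem (U.mul_mem (U.mul_mem hg hh) (U.inv_mem hg)) (U.inv_mem hh)
  have hle1 : k1 ⁅U, U⁆ ≤ commutator G ⊓ k1 U := by
    intro g hg
    refine ⟨?_, hUU hg⟩
    have hm : g ∈ p1 ⁅U, U⁆ := ⟨(g, 1), hg, rfl⟩
    rwa [hp1c] at hm
  have hle2 : k2 ⁅U, U⁆ ≤ commutator H ⊓ k2 U := by
    intro h hh
    refine ⟨?_, hUU hh⟩
    have hm : h ∈ p2 ⁅U, U⁆ := ⟨(1, h), hh, rfl⟩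
    rwa [hp2c] at hm
  -- equality iff card equality
  have hceq1 : commutator G ⊓ k1 U = k1 ⁅U, U⁆ ↔
      Nat.card ((commutator G ⊓ k1 U : Subgroup G)) = Nat.card (k1 ⁅U, U⁆) := by
    constructor
    · intro h; rw [h]
    · intro h
      exact (Subgroup.eq_of_le_of_card_ge hle1 h.le).symm
  have hceq2 : commutator H ⊓ k2 U = k2 ⁅U, U⁆ ↔
      Nat.card ((commutator H ⊓ k2 U : Subgroup H)) = Nat.card (k2 ⁅U, U⁆) := by
    constructor
    · intro h; rw [h]
    · intro h
      exact (Subgroup.eq_of_le_of_card_ge hle2 h.le).symm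
  rw [hceq1, hceq2]
  -- positivity
  have pq : 0 < Nat.card (commutator (G ⧸ k1 U)) := Nat.card_pos
  have pa' : 0 < Nat.card (k1 ⁅U, U⁆) := Nat.card_pos
  have pb' : 0 < Nat.card (k2 ⁅U, U⁆) := Nat.card_pos
  set q := Nat.card (commutator (G ⧸ k1 U))
  set a := Nat.card ((commutator G ⊓ k1 U : Subgroup G))
  set b := Nat.card ((commutator H ⊓ k2 U : Subgroup H))
  set a' := Nat.card (k1 ⁅U, U⁆)
  set b' := Nat.card (k2 ⁅U, U⁆)
  rw [← hq] at F2
  have key : b * a' = a * b' := by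
    have h5 : q * (b * a') = q * (a * b') := by
      rw [← mul_assoc, ← mul_assoc, F1, F2, F3, F4]
    exact Nat.eq_of_mul_eq_mul_left pq h5
  constructor
  · intro hab
    refine Nat.eq_of_mul_eq_mul_right pa' ?_
    calc b * a' = a * b' := key
      _ = a' * b' := by rw [hab]
      _ = b' * a' := mul_comm _ _
  · intro hbb
    refine Nat.eq_of_mul_eq_mul_right pb' ?_
    calc a * b' = b * a' := key.symm
      _ = b' * a' := by rw [hbb]
      _ = a' * b' := mul_comm _ _
end

section
/- Let G, H be finite groups, U ≤ G × H a subdirect product, and p a prime. If k₁(U') contains a Sylow p-subgroup of G' ∩ k₁(U) then k₂(U') contains a Sylow p-subgroup of H' ∩ k₂(U). -/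
section Aux

variable {G H : Type*} [Group G] [Group H]

lemma mem_k1 {U : Subgroup (G × H)} {g : G} : g ∈ k1 U ↔ (g, 1) ∈ U := Iff.rfl
lemma mem_k2 {U : Subgroup (G × H)} {h : H} : h ∈ k2 U ↔ (1, h) ∈ U := Iff.rfl

lemma card_map_mul_card_inf_ker {G' : Type*} [Group G'] [Finite G]
    (f : G →* G') (K : Subgroup G) :
    Nat.card K = Nat.card (K.map f) * Nat.card ↥(K ⊓ f.ker) := by
  have hsurj := f.subgroupMap_surjective K
  rw [Subgroup.card_eq_card_quotient_mul_card_subgroup (f.subgroupMap K).ker,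
      Nat.card_congr (QuotientGroup.quotientKerEquivOfSurjective _ hsurj).toEquiv]
  congr 1
  refine Nat.card_congr ⟨fun x => ⟨x.1.1, ⟨x.1.2, ?_⟩⟩,
    fun y => ⟨⟨y.1, y.2.1⟩, ?_⟩, fun x => rfl, fun y => rfl⟩
  · exact MonoidHom.mem_ker.mpr (congrArg Subtype.val x.2)
  · exact Subtype.ext (MonoidHom.mem_ker.mp y.2.2)

lemma card_p1_mul_card_k2 [Finite G] [Finite H] (U : Subgroup (G × H)) :
    Nat.card U = Nat.card (p1 U) * Nat.card (k2 U) := by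
  rw [card_map_mul_card_inf_ker (MonoidHom.fst G H) U]
  congr 1
  refine Nat.card_congr ⟨fun x => ⟨(x : G × H).2, ?_⟩, fun y => ⟨((1 : G), (y : H)), ⟨y.2, rfl⟩⟩,
    fun x => ?_, fun y => rfl⟩
  · have h1 : (x : G × H).1 = 1 := x.2.2
    have hU : (x : G × H) ∈ U := x.2.1
    rw [mem_k2, ← h1]
    exact hU
  · apply Subtype.ext
    exact Prod.ext x.2.2.symm rfl

lemma card_p2_mul_card_k1 [Finite G] [Finite H] (U : Subgroup (G × H)) :
    Nat.card U = Nat.card (p2 U) * Nat.card (k1 U) := by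
  rw [card_map_mul_card_inf_ker (MonoidHom.snd G H) U]
  congr 1
  refine Nat.card_congr ⟨fun x => ⟨(x : G × H).1, ?_⟩, fun y => ⟨((y : G), (1 : H)), ⟨y.2, rfl⟩⟩,
    fun x => ?_, fun y => rfl⟩
  · have h1 : (x : G × H).2 = 1 := x.2.2
    have hU : (x : G × H) ∈ U := x.2.1
    rw [mem_k1, ← h1]
    exact hU
  · apply Subtype.ext
    exact Prod.ext rfl x.2.2.symm

end Aux

section Main

variable {G H : Type*} [Group G] [Group H]

lemma k1_normal (U : Subgroup (G × H)) (h1 : p1 U = ⊤) : (k1 U).Normal := by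
  constructor
  intro n hn g
  have hg : g ∈ p1 U := h1 ▸ Subgroup.mem_top g
  obtain ⟨u, hu, hgu⟩ := hg
  have hu' : ((g, u.2) : G × H) ∈ U := by
    rw [show ((g, u.2) : G × H) = u from Prod.ext hgu.symm rfl]; exact hu
  have hm := U.mul_mem (U.mul_mem hu' (mem_k1.mp hn)) (U.inv_mem hu')
  rw [mem_k1]
  simpa using hm

lemma k2_normal (U : Subgroup (G × H)) (h2 : p2 U = ⊤) : (k2 U).Normal := by
  constructor
  intro n hn g
  have hg : g ∈ p2 U := h2 ▸ Subgroup.mem_top g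
  obtain ⟨u, hu, hgu⟩ := hg
  have hu' : ((u.1, g) : G × H) ∈ U := by
    rw [show ((u.1, g) : G × H) = u from Prod.ext rfl hgu.symm]; exact hu
  have hm := U.mul_mem (U.mul_mem hu' (mem_k2.mp hn)) (U.inv_mem hu')
  rw [mem_k2]
  simpa using hm

lemma card_commutator_quot_eq [Finite G] [Finite H] (U : Subgroup (G × H))
    (h1 : p1 U = ⊤) (h2 : p2 U = ⊤) [hn1 : (k1 U).Normal] [hn2 : (k2 U).Normal] :
    Nat.card (commutator (G ⧸ k1 U)) = Nat.card (commutator (H ⧸ k2 U)) := by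
  set f₁ : ↥U →* G ⧸ k1 U :=
    (QuotientGroup.mk' (k1 U)).comp ((MonoidHom.fst G H).comp U.subtype) with hf₁def
  set f₂ : ↥U →* H ⧸ k2 U :=
    (QuotientGroup.mk' (k2 U)).comp ((MonoidHom.snd G H).comp U.subtype) with hf₂def
  have hf₁ : Function.Surjective f₁ := by
    intro x
    obtain ⟨g, rfl⟩ := QuotientGroup.mk'_surjective (k1 U) x
    have hg : g ∈ p1 U := h1 ▸ Subgroup.mem_top g
    obtain ⟨u, hu, hgu⟩ := hg
    exact ⟨⟨u, hu⟩, congrArg _ hgu⟩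
  have hf₂ : Function.Surjective f₂ := by
    intro x
    obtain ⟨g, rfl⟩ := QuotientGroup.mk'_surjective (k2 U) x
    have hg : g ∈ p2 U := h2 ▸ Subgroup.mem_top g
    obtain ⟨u, hu, hgu⟩ := hg
    exact ⟨⟨u, hu⟩, congrArg _ hgu⟩
  have hker : f₁.ker = f₂.ker := by
    ext u
    have h₁ : u ∈ f₁.ker ↔ ((u : G × H).1, (1 : H)) ∈ U := by
      rw [MonoidHom.mem_ker]
      show (((u : G × H).1 : G ⧸ k1 U) = 1) ↔ _
      rw [QuotientGroup.eq_one_iff]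
      exact mem_k1
    have h₂ : u ∈ f₂.ker ↔ ((1 : G), (u : G × H).2) ∈ U := by
      rw [MonoidHom.mem_ker]
      show (((u : G × H).2 : H ⧸ k2 U) = 1) ↔ _
      rw [QuotientGroup.eq_one_iff]
      exact mem_k2
    rw [h₁, h₂]
    constructor
    · intro h
      have := U.mul_mem (U.inv_mem h) u.2
      simpa [Prod.mul_def] using this
    · intro h
      have := U.mul_mem u.2 (U.inv_mem h)
      simpa [Prod.mul_def] using this
  let e : (G ⧸ k1 U) ≃* (H ⧸ k2 U) :=
    ((QuotientGroup.quotientKerEquivOfSurjective f₁ hf₁).symm.trans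
      (QuotientGroup.quotientMulEquivOfEq hker)).trans
      (QuotientGroup.quotientKerEquivOfSurjective f₂ hf₂)
  have hmap : (commutator (G ⧸ k1 U)).map e.toMonoidHom = commutator (H ⧸ k2 U) := by
    show Subgroup.map e.toMonoidHom ⁅(⊤ : Subgroup (G ⧸ k1 U)), ⊤⁆ = ⁅(⊤ : Subgroup (H ⧸ k2 U)), ⊤⁆
    rw [Subgroup.map_commutator, Subgroup.map_top_of_surjective _ e.surjective]
  rw [← hmap]
  exact Nat.card_congr (Subgroup.equivMapOfInjective _ _ e.injective).toEquiv

end Main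

theorem sylow_containment_symm {G H : Type*} [Group G] [Group H]
    [Finite G] [Finite H] (U : Subgroup (G × H))
    (h1 : p1 U = ⊤) (h2 : p2 U = ⊤) (p : ℕ) [Fact p.Prime]
    (hG : ∃ P : Sylow p ↥(commutator G ⊓ k1 U),
      (P : Subgroup ↥(commutator G ⊓ k1 U)).map (commutator G ⊓ k1 U).subtype ≤ k1 ⁅U, U⁆) :
    ∃ Q : Sylow p ↥(commutator H ⊓ k2 U),
      (Q : Subgroup ↥(commutator H ⊓ k2 U)).map (commutator H ⊓ k2 U).subtype ≤ k2 ⁅U, U⁆ := by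
  classical
  haveI hn1 : (k1 U).Normal := k1_normal U h1
  haveI hn2 : (k2 U).Normal := k2_normal U h2
  -- projections of the commutator subgroup
  have hp1c : p1 ⁅U, U⁆ = commutator G := by
    show Subgroup.map (MonoidHom.fst G H) ⁅U, U⁆ = _
    rw [Subgroup.map_commutator]
    show ⁅p1 U, p1 U⁆ = _
    rw [h1]; rfl
  have hp2c : p2 ⁅U, U⁆ = commutator H := by
    show Subgroup.map (MonoidHom.snd G H) ⁅U, U⁆ = _
    rw [Subgroup.map_commutator]
    show ⁅p2 U, p2 U⁆ = _
    rw [h2]; rfl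
  have hUU : ⁅U, U⁆ ≤ U := by
    rw [Subgroup.commutator_le]
    intro g hg h hh
    rw [commutatorElement_def]
    exact U.mul_mem (U.mul_mem (U.mul_mem hg hh) (U.inv_mem hg)) (U.inv_mem hh)
  have hb1K : k1 ⁅U, U⁆ ≤ commutator G ⊓ k1 U := by
    intro g hg
    refine ⟨?_, mem_k1.mpr (hUU (mem_k1.mp hg))⟩
    have : g ∈ p1 ⁅U, U⁆ := ⟨(g, 1), hg, rfl⟩
    rwa [hp1c] at this
  have hb2K : k2 ⁅U, U⁆ ≤ commutator H ⊓ k2 U := by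
    intro g hg
    refine ⟨?_, mem_k2.mpr (hUU (mem_k2.mp hg))⟩
    have : g ∈ p2 ⁅U, U⁆ := ⟨(1, g), hg, rfl⟩
    rwa [hp2c] at this
  set K₁ := commutator G ⊓ k1 U with hK₁
  set K₂ := commutator H ⊓ k2 U with hK₂
  set L₁ := (k1 ⁅U, U⁆).subgroupOf K₁ with hL₁
  set L₂ := (k2 ⁅U, U⁆).subgroupOf K₂ with hL₂
  -- cardinality bookkeeping
  set a₁ := Nat.card K₁
  set a₂ := Nat.card K₂
  set b₁ := Nat.card (k1 ⁅U, U⁆)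
  set b₂ := Nat.card (k2 ⁅U, U⁆)
  set c := Nat.card (commutator (G ⧸ k1 U)) with hc
  have hcG : Nat.card (commutator G) = c * a₁ := by
    have h := card_map_mul_card_inf_ker (QuotientGroup.mk' (k1 U)) (commutator G)
    rw [QuotientGroup.ker_mk'] at h
    have hmap : (commutator G).map (QuotientGroup.mk' (k1 U)) = commutator (G ⧸ k1 U) := by
      show Subgroup.map (QuotientGroup.mk' (k1 U)) ⁅(⊤ : Subgroup G), ⊤⁆ = ⁅(⊤ : Subgroup _), ⊤⁆
      rw [Subgroup.map_commutator,
        Subgroup.map_top_of_surjective _ (QuotientGroup.mk'_surjective _)]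
    rwa [hmap] at h
  have hcH : Nat.card (commutator H) = c * a₂ := by
    have h := card_map_mul_card_inf_ker (QuotientGroup.mk' (k2 U)) (commutator H)
    rw [QuotientGroup.ker_mk'] at h
    have hmap : (commutator H).map (QuotientGroup.mk' (k2 U)) = commutator (H ⧸ k2 U) := by
      show Subgroup.map (QuotientGroup.mk' (k2 U)) ⁅(⊤ : Subgroup H), ⊤⁆ = ⁅(⊤ : Subgroup _), ⊤⁆
      rw [Subgroup.map_commutator,
        Subgroup.map_top_of_surjective _ (QuotientGroup.mk'_surjective _)]
    rw [hc, card_commutator_quot_eq U h1 h2]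
    rwa [hmap] at h
  -- Goursat counting for the commutator subgroup of U
  have hUUcard : Nat.card (commutator G) * b₂ = Nat.card (commutator H) * b₁ := by
    rw [← hp1c, ← hp2c, ← card_p1_mul_card_k2 ⁅U, U⁆, ← card_p2_mul_card_k1 ⁅U, U⁆]
  -- translate to indices
  have hcardL₁ : Nat.card L₁ = b₁ := Nat.card_congr (Subgroup.subgroupOfEquivOfLe hb1K).toEquiv
  have hcardL₂ : Nat.card L₂ = b₂ := Nat.card_congr (Subgroup.subgroupOfEquivOfLe hb2K).toEquiv
  have hi₁ : b₁ * L₁.index = a₁ := by rw [← hcardL₁]; exact Subgroup.card_mul_index L₁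
  have hi₂ : b₂ * L₂.index = a₂ := by rw [← hcardL₂]; exact Subgroup.card_mul_index L₂
  have hcpos : 0 < c := Nat.card_pos
  have hb₁pos : 0 < b₁ := Nat.card_pos
  have hb₂pos : 0 < b₂ := Nat.card_pos
  have hab : a₁ * b₂ = a₂ * b₁ := by
    have := hUUcard
    rw [hcG, hcH] at this
    exact Nat.eq_of_mul_eq_mul_left hcpos (by linarith [this] )
  have hindex_eq : L₁.index = L₂.index := by
    have h' : b₁ * L₁.index * b₂ = b₂ * L₂.index * b₁ := by rw [hi₁, hi₂, hab]
    have h'' : b₁ * b₂ * L₁.index = b₁ * b₂ * L₂.index := by ring_nf; ring_nf at h'; linarith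
    exact Nat.eq_of_mul_eq_mul_left (Nat.mul_pos hb₁pos hb₂pos) h''
  -- the hypothesis gives that p does not divide the index of L₁
  obtain ⟨P, hP⟩ := hG
  have hPL₁ : (P : Subgroup K₁) ≤ L₁ := by
    intro x hx
    exact Subgroup.mem_subgroupOf.mpr (hP (Subgroup.mem_map.mpr ⟨x, hx, rfl⟩))
  have hpndvd : ¬ p ∣ L₁.index := fun hdvd =>
    P.not_dvd_index (hdvd.trans (Subgroup.index_dvd_of_le hPL₁))
  rw [hindex_eq] at hpndvd
  -- L₂ is normal in K₂
  haveI hL₂n : L₂.Normal := by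
    constructor
    intro n hn g
    have hn' : ((1 : G), (n : H)) ∈ ⁅U, U⁆ := mem_k2.mp (Subgroup.mem_subgroupOf.mp hn)
    have hgU : ((1 : G), (g : H)) ∈ U := g.2.2
    have hconj : ((1 : G), (g : H)) * (1, (n : H)) * ((1 : G), (g : H))⁻¹ ∈ ⁅U, U⁆ := by
      open scoped commutatorElement in
      have heq : ((1 : G), (g : H)) * (1, (n : H)) * ((1 : G), (g : H))⁻¹ =
          ⁅((1 : G), (g : H)), ((1 : G), (n : H))⁆ * (1, (n : H)) := by group
      rw [heq]
      exact mul_mem (Subgroup.commutator_mem_commutator hgU (hUU hn')) hn'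
    refine Subgroup.mem_subgroupOf.mpr (mem_k2.mpr ?_)
    simpa [Prod.mul_def] using hconj
  -- any Sylow p-subgroup of K₂ is contained in L₂
  obtain ⟨Q⟩ : Nonempty (Sylow p K₂) := inferInstance
  refine ⟨Q, ?_⟩
  have hQL₂ : (Q : Subgroup K₂) ≤ L₂ := by
    have hmapP : IsPGroup p ((Q : Subgroup K₂).map (QuotientGroup.mk' L₂)) :=
      Q.2.map (QuotientGroup.mk' L₂)
    obtain ⟨k, hk⟩ := hmapP.exists_card_eq
    have hdvd : Nat.card ((Q : Subgroup K₂).map (QuotientGroup.mk' L₂)) ∣ L₂.index := by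
      rw [Subgroup.index_eq_card]
      exact Subgroup.card_subgroup_dvd_card _
    have hk0 : k = 0 := by
      by_contra hk0
      exact hpndvd ((dvd_pow_self p hk0).trans (hk ▸ hdvd))
    have hcard1 : Nat.card ((Q : Subgroup K₂).map (QuotientGroup.mk' L₂)) = 1 := by
      rw [hk, hk0, pow_zero]
    have := Subgroup.eq_bot_of_card_eq _ hcard1
    rw [Subgroup.map_eq_bot_iff, QuotientGroup.ker_mk'] at this
    exact this
  calc (Q : Subgroup K₂).map K₂.subtype ≤ L₂.map K₂.subtype := Subgroup.map_mono hQL₂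
    _ = k2 ⁅U, U⁆ ⊓ K₂ := Subgroup.subgroupOf_map_subtype _ _
    _ ≤ k2 ⁅U, U⁆ := inf_le_left
end

section
/- Let G be a finite group, φ ∈ Aut(G), and Δ(G,φ) ≤ U ≤ G × G. Then k₁(U') = [k₁(U), G], where U' is the commutator subgroup of U. -/
def twistedDiag {G : Type*} [Group G] (φ : G ≃* G) : Subgroup (G × G) :=
  ((MonoidHom.id G).prod φ.toMonoidHom).range

open scoped commutatorElement

theorem k1_commutator_eq {G : Type*} [Group G] [Finite G] (φ : G ≃* G)
    (U : Subgroup (G × G)) (hU : twistedDiag φ ≤ U) :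
    k1 ⁅U, U⁆ = ⁅k1 U, (⊤ : Subgroup G)⁆ := by
  set N := k1 U with hNdef
  have hmemN : ∀ g : G, g ∈ N ↔ ((g, (1:G)) : G × G) ∈ U := by
    intro g
    simp [hNdef, k1, Subgroup.mem_comap]
  have hdiag : ∀ g : G, ((g, φ g) : G × G) ∈ U := by
    intro g
    exact hU ⟨g, rfl⟩
  haveI hNnormal : N.Normal := by
    constructor
    intro n hn g
    rw [hmemN] at hn ⊢
    have h1 : (((g, φ g) : G × G) * (n, 1) * ((g, φ g) : G × G)⁻¹) ∈ U :=
      U.mul_mem (U.mul_mem (hdiag g) hn) (U.inv_mem (hdiag g))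
    simpa using h1
  set M := ⁅N, (⊤ : Subgroup G)⁆ with hMdef
  haveI hMnormal : M.Normal := Subgroup.commutator_normal N ⊤
  -- elements of N are central mod M
  have central : ∀ n ∈ N, ∀ g : G,
      ((n : G ⧸ M) * (g : G ⧸ M) = (g : G ⧸ M) * (n : G ⧸ M)) := by
    intro n hn g
    rw [← QuotientGroup.mk_mul, ← QuotientGroup.mk_mul, QuotientGroup.eq]
    have h2 : ⁅g⁻¹, n⁻¹⁆ ∈ ⁅(⊤ : Subgroup G), N⁆ :=
      Subgroup.commutator_mem_commutator trivial (N.inv_mem hn)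
    rw [Subgroup.commutator_comm] at h2
    simpa [commutatorElement_def, mul_assoc] using h2
  -- for (a,b) ∈ U, a * (φ⁻¹ b)⁻¹ ∈ N
  have hkey : ∀ a b : G, ((a, b) : G × G) ∈ U → a * (φ.symm b)⁻¹ ∈ N := by
    intro a b hab
    have hd : ((φ.symm b, b) : G × G) ∈ U := by
      have := hdiag (φ.symm b)
      simpa using this
    have h1 : (((a, b) : G × G) * ((φ.symm b, b) : G × G)⁻¹) ∈ U :=
      U.mul_mem hab (U.inv_mem hd)
    rw [hmemN]
    simpa using h1
  -- the homomorphism ψ : U →* G ⧸ M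
  let ψ : ↥U →* G ⧸ M :=
    { toFun := fun u => ((u.1.1 * (φ.symm u.1.2)⁻¹ : G) : G ⧸ M)
      map_one' := by simp
      map_mul' := by
        rintro ⟨⟨a, b⟩, hab⟩ ⟨⟨c, d⟩, hcd⟩
        have hm : c * (φ.symm d)⁻¹ ∈ N := hkey c d hcd
        show ((a * c * (φ.symm (b * d))⁻¹ : G) : G ⧸ M)
            = ((a * (φ.symm b)⁻¹ : G) : G ⧸ M) * ((c * (φ.symm d)⁻¹ : G) : G ⧸ M)
        rw [map_mul, mul_inv_rev]
        calc ((a * c * ((φ.symm d)⁻¹ * (φ.symm b)⁻¹) : G) : G ⧸ M)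
            = (a : G ⧸ M) * ((c * (φ.symm d)⁻¹ : G) : G ⧸ M) * (((φ.symm b)⁻¹ : G) : G ⧸ M) := by
              rw [← QuotientGroup.mk_mul, ← QuotientGroup.mk_mul]
              congr 1
              group
          _ = (a : G ⧸ M) * ((((φ.symm b)⁻¹ : G) : G ⧸ M) * ((c * (φ.symm d)⁻¹ : G) : G ⧸ M)) := by
              rw [mul_assoc, central _ hm]
          _ = ((a * (φ.symm b)⁻¹ : G) : G ⧸ M) * ((c * (φ.symm d)⁻¹ : G) : G ⧸ M) := by
              rw [← QuotientGroup.mk_mul, ← QuotientGroup.mk_mul, ← QuotientGroup.mk_mul]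
              congr 1
              group }
  -- ψ kills commutators
  have hψcomm : ∀ u v : ↥U, ψ ⁅u, v⁆ = 1 := by
    intro u v
    rw [map_commutatorElement, commutatorElement_eq_one_iff_commute]
    obtain ⟨⟨a, b⟩, hab⟩ := u
    obtain ⟨⟨c, d⟩, hcd⟩ := v
    exact central _ (hkey a b hab) _
  -- forward inclusion: k1 ⁅U,U⁆ ≤ M
  have hle1 : k1 ⁅U, U⁆ ≤ M := by
    have hUU : ⁅U, U⁆ ≤ ψ.ker.map U.subtype := by
      rw [Subgroup.commutator_le]
      intro u hu v hv
      refine ⟨⁅(⟨u, hu⟩ : ↥U), (⟨v, hv⟩ : ↥U)⁆, hψcomm _ _, ?_⟩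
      simp [commutatorElement_def]
    intro x hx
    have hx' : ((x, (1:G)) : G × G) ∈ ⁅U, U⁆ := by
      simpa [k1, Subgroup.mem_comap] using hx
    obtain ⟨w, hw, hweq⟩ := hUU hx'
    have ha : (w : G × G).1 = x := congrArg Prod.fst hweq
    have hb : (w : G × G).2 = 1 := congrArg Prod.snd hweq
    have hψw : (((w : G × G).1 * (φ.symm (w : G × G).2)⁻¹ : G) : G ⧸ M) = 1 := hw
    rw [ha, hb, map_one, inv_one, mul_one, QuotientGroup.eq_one_iff] at hψw
    exact hψw
  -- reverse inclusion: M ≤ k1 ⁅U,U⁆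
  have hle2 : M ≤ k1 ⁅U, U⁆ := by
    rw [hMdef, Subgroup.commutator_le]
    intro n hn g _
    have h1 : ((n, (1:G)) : G × G) ∈ U := (hmemN n).mp hn
    have h2 : ⁅((n, (1:G)) : G × G), ((g, φ g) : G × G)⁆ ∈ ⁅U, U⁆ :=
      Subgroup.commutator_mem_commutator h1 (hdiag g)
    have : ((⁅n, g⁆, (1:G)) : G × G) ∈ ⁅U, U⁆ := by
      simpa [commutatorElement_def, Prod.ext_iff] using h2
    exact this
  exact le_antisymm hle1 hle2
end

section
/- Let G be a finite group, φ, ψ ∈ Aut(G), Δ(G,φ) ≤ U ≤ G × G and Δ(G,ψ) ≤ V ≤ G × G. Then k₁(U ∗ V) = k₁(U) · φ⁻¹(k₁(V)), where U ∗ V = {(u,v) ∈ G × G : ∃ x ∈ G, (u,x) ∈ U and (x,v) ∈ V}. -/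
open Pointwise

/-- The ∗-product of subgroups `U ≤ F × G` and `V ≤ G × H`. -/
def starProd {F G H : Type*} [Group F] [Group G] [Group H]
    (U : Subgroup (F × G)) (V : Subgroup (G × H)) : Subgroup (F × H) where
  carrier := {x | ∃ g : G, (x.1, g) ∈ U ∧ (g, x.2) ∈ V}
  one_mem' := ⟨1, U.one_mem, V.one_mem⟩
  mul_mem' := by
    rintro a b ⟨x, hx1, hx2⟩ ⟨y, hy1, hy2⟩
    exact ⟨x * y, U.mul_mem hx1 hy1, V.mul_mem hx2 hy2⟩
  inv_mem' := by
    rintro a ⟨x, h1, h2⟩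
    exact ⟨x⁻¹, U.inv_mem h1, V.inv_mem h2⟩

theorem k1_starProd {G : Type*} [Group G] [Finite G] (φ ψ : G ≃* G)
    (U V : Subgroup (G × G)) (hU : twistedDiag φ ≤ U) (hV : twistedDiag ψ ≤ V) :
    (k1 (starProd U V) : Set G) =
      (k1 U : Set G) * ((k1 V).map φ.symm.toMonoidHom : Set G) := by
  ext g
  simp only [SetLike.mem_coe, Set.mem_mul]
  constructor
  · rintro ⟨x, hx1, hx2⟩
    refine ⟨g * (φ.symm x)⁻¹, ?_, φ.symm x, ⟨x, hx2, rfl⟩, by group⟩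
    have hd : ((φ.symm x, x) : G × G) ∈ U := hU ⟨φ.symm x, by simp⟩
    have := U.mul_mem hx1 (U.inv_mem hd)
    simpa [k1] using this
  · rintro ⟨a, ha, _, ⟨b, hb, rfl⟩, rfl⟩
    refine ⟨b, ?_, by simpa [k1] using hb⟩
    have hd : ((φ.symm b, b) : G × G) ∈ U := hU ⟨φ.symm b, by simp⟩
    have := U.mul_mem ha hd
    simpa using this
end

section
/- Let G be a finite group, φ, ψ ∈ Aut(G), Δ(G,φ) ≤ U ≤ G × G and Δ(G,ψ) ≤ V ≤ G × G. Then k₂(U ∗ V) = k₂(V) · ψ(k₂(U)). -/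
open Pointwise

theorem k2_starProd {G : Type*} [Group G] [Finite G] (φ ψ : G ≃* G)
    (U V : Subgroup (G × G)) (hU : twistedDiag φ ≤ U) (hV : twistedDiag ψ ≤ V) :
    (k2 (starProd U V) : Set G) =
      (k2 V : Set G) * ((k2 U).map ψ.toMonoidHom : Set G) := by
  ext h
  simp only [Set.mem_mul, SetLike.mem_coe, Subgroup.mem_map]
  constructor
  · rintro ⟨g, hg1, hg2⟩
    have hgV : (g, ψ g) ∈ V := hV ⟨g, rfl⟩
    refine ⟨h * (ψ g)⁻¹, ?_, ψ g, ⟨g, hg1, rfl⟩, by group⟩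
    have : ((g, h) * (g, ψ g)⁻¹ : G × G) ∈ V := V.mul_mem hg2 (V.inv_mem hgV)
    simpa [k2] using this
  · rintro ⟨v, hv, _, ⟨u, hu, rfl⟩, rfl⟩
    refine ⟨u, hu, ?_⟩
    have huV : (u, ψ u) ∈ V := hV ⟨u, rfl⟩
    have : ((1, v) * (u, ψ u) : G × G) ∈ V := V.mul_mem hv huV
    simpa using this
end
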